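/- Let U > 0, 0 < K₁ < U, K₂ = U²/K₁, τ > 0, and let σ_a ≥ σ_b > 0 be implied volatilities with nonnegative skew (i.e. the out-of-the-money put implied volatility σ_a dominates the out-of-the-money call implied volatility σ_b). Then P^bs(U, K₁, τ, σ_a) − (K₁/U) · C^bs(U, K₂, τ, σ_b) ≥ 0. -/

import Mathlib

open MeasureTheory Filter Set

/-- Standard normal cumulative distribution function. -/
noncomputable def stdNormalCDF (x : ℝ) : ℝ :=
  (Real.sqrt (2 * Real.pi))⁻¹ * ∫ y in Set.Iic x, Real.exp (-(y ^ 2) / 2)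

/-- Black–Scholes call price with zero interest and dividend rates. -/
noncomputable def bsCall (S K τ σ : ℝ) : ℝ :=
  let d1 := (Real.log (S / K) + σ ^ 2 * τ / 2) / (σ * Real.sqrt τ)
  S * stdNormalCDF d1 - K * stdNormalCDF (d1 - σ * Real.sqrt τ)

/-- Black–Scholes put price with zero interest and dividend rates. -/
noncomputable def bsPut (S K τ σ : ℝ) : ℝ := bsCall S K τ σ - S + K

/-- The denominator appearing in the PCLVG call price formula. -/
noncomputable def pclvgD (σ1 σ2 U τ : ℝ) : ℝ :=
  1 / σ1 + 1 / σ2 - (1 / σ2 - 1 / σ1) * Real.exp (-2 * U / (σ1 * τ))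

/-- The explicit PCLVG call price `C^σ(U,K,τ)`. -/
noncomputable def pclvgCall (σ1 σ2 U K τ : ℝ) : ℝ :=
  if K < U then
    (U - K) +
      τ * Real.exp (-(U - K) / (σ1 * τ)) * (1 - Real.exp (-2 * K / (σ1 * τ))) /
        pclvgD σ1 σ2 U τ
  else
    τ * Real.exp (-(K - U) / (σ2 * τ)) * (1 - Real.exp (-2 * U / (σ1 * τ))) /
      pclvgD σ1 σ2 U τ

/-- The PCLVG put price `P^σ(U,K,τ) = C^σ(U,K,τ) − (U − K)`. -/
noncomputable def pclvgPut (σ1 σ2 U K τ : ℝ) : ℝ := pclvgCall σ1 σ2 U K τ - (U - K)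

/-! ### Auxiliary lemmas -/

lemma gauss_integrable' : Integrable (fun y : ℝ => Real.exp (-(y ^ 2) / 2)) := by
  have h := integrable_exp_neg_mul_sq (b := (1:ℝ)/2) (by norm_num)
  convert h using 2 with y
  ring_nf

lemma gauss_total' : (∫ y : ℝ, Real.exp (-(y ^ 2) / 2)) = Real.sqrt (2 * Real.pi) := by
  have h := integral_gaussian ((1:ℝ)/2)
  rw [show Real.pi / ((1:ℝ)/2) = 2 * Real.pi by ring] at h
  rw [← h]
  congr 1 with y
  ring_nf

lemma stdNormalCDF_neg' (x : ℝ) : stdNormalCDF (-x) = 1 - stdNormalCDF x := by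
  have hint := gauss_integrable'
  have h1 : (∫ y in Iic (-x), Real.exp (-(y ^ 2) / 2))
      = ∫ y in Ioi x, Real.exp (-(y ^ 2) / 2) := by
    have h2 := integral_comp_neg_Iic (-x) (fun y => Real.exp (-(y ^ 2) / 2))
    simp only [neg_neg] at h2
    rw [← h2]
    congr 1 with y
    ring_nf
  have h3 : (∫ y in Iic x, Real.exp (-(y ^ 2) / 2)) + ∫ y in Ioi x, Real.exp (-(y ^ 2) / 2)
      = Real.sqrt (2 * Real.pi) := by
    rw [intervalIntegral.integral_Iic_add_Ioi hint.integrableOn hint.integrableOn, gauss_total']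
  have hpos : (0:ℝ) < Real.sqrt (2 * Real.pi) :=
    Real.sqrt_pos.mpr (by positivity)
  unfold stdNormalCDF
  rw [h1, show (∫ y in Ioi x, Real.exp (-(y ^ 2) / 2))
      = Real.sqrt (2 * Real.pi) - ∫ y in Iic x, Real.exp (-(y ^ 2) / 2) from by linarith,
    mul_sub, inv_mul_cancel₀ hpos.ne']

lemma hasDerivAt_stdNormalCDF' (x : ℝ) :
    HasDerivAt stdNormalCDF ((Real.sqrt (2 * Real.pi))⁻¹ * Real.exp (-(x ^ 2) / 2)) x := by
  have hint := gauss_integrable'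
  have hfun : ∀ z : ℝ, stdNormalCDF z = (Real.sqrt (2 * Real.pi))⁻¹ *
      ((∫ y in Iic (0:ℝ), Real.exp (-(y ^ 2) / 2)) + ∫ y in (0:ℝ)..z, Real.exp (-(y ^ 2) / 2)) := by
    intro z
    unfold stdNormalCDF
    rw [← intervalIntegral.integral_Iic_sub_Iic hint.integrableOn hint.integrableOn]
    ring
  have hd : HasDerivAt (fun z => ∫ y in (0:ℝ)..z, Real.exp (-(y ^ 2) / 2))
      (Real.exp (-(x ^ 2) / 2)) x := by
    exact intervalIntegral.integral_hasDerivAt_right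
      hint.intervalIntegrable
      hint.aestronglyMeasurable.stronglyMeasurableAtFilter
      (Real.continuous_exp.comp (by continuity)).continuousAt
  have := ((hd.const_add (∫ y in Iic (0:ℝ), Real.exp (-(y ^ 2) / 2))).const_mul
    (Real.sqrt (2 * Real.pi))⁻¹)
  refine HasDerivAt.congr_of_eventuallyEq (by convert this using 1) ?_
  filter_upwards with z using (hfun z)

lemma bsCall_deriv_pos' (S K τ : ℝ) (hS : 0 < S) (hK : 0 < K) (hτ : 0 < τ)
    {σ : ℝ} (hσ : 0 < σ) :
    ∃ v : ℝ, 0 < v ∧ HasDerivAt (fun s => bsCall S K τ s) v σ := by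
  set m := Real.log (S / K) with hm
  set t := Real.sqrt τ with ht
  have htpos : 0 < t := Real.sqrt_pos.mpr hτ
  have ht2 : t ^ 2 = τ := Real.sq_sqrt hτ.le
  set c := (Real.sqrt (2 * Real.pi))⁻¹ with hc
  have hcpos : 0 < c := by positivity
  have hnum : HasDerivAt (fun s : ℝ => m + s ^ 2 * τ / 2) (σ * τ) σ := by
    have : HasDerivAt (fun s : ℝ => s ^ 2) (2 * σ) σ := by
      simpa using (hasDerivAt_pow 2 σ)
    have := ((this.mul_const τ).div_const 2).const_add m
    rw [show σ * τ = 2 * σ * τ / 2 by ring]; exact this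
  have hden : HasDerivAt (fun s : ℝ => s * t) t σ := by
    simpa using (hasDerivAt_id σ).mul_const t
  have hgn : σ * t ≠ 0 := by positivity
  have hd1 : HasDerivAt (fun s : ℝ => (m + s ^ 2 * τ / 2) / (s * t))
      ((σ * τ * (σ * t) - (m + σ ^ 2 * τ / 2) * t) / (σ * t) ^ 2) σ :=
    hnum.div hden hgn
  set d1 : ℝ := (m + σ ^ 2 * τ / 2) / (σ * t) with hd1def
  set d1' : ℝ := (σ * τ * (σ * t) - (m + σ ^ 2 * τ / 2) * t) / (σ * t) ^ 2 with hd1'def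
  set d2 : ℝ := d1 - σ * t with hd2def
  have hN1 : HasDerivAt (fun s : ℝ => stdNormalCDF ((m + s ^ 2 * τ / 2) / (s * t)))
      (c * Real.exp (-(d1 ^ 2) / 2) * d1') σ :=
    HasDerivAt.comp (h₂ := stdNormalCDF) σ (hasDerivAt_stdNormalCDF' d1) hd1
  have hd2' : HasDerivAt (fun s : ℝ => (m + s ^ 2 * τ / 2) / (s * t) - s * t) (d1' - t) σ :=
    hd1.sub hden
  have hN2 : HasDerivAt (fun s : ℝ => stdNormalCDF ((m + s ^ 2 * τ / 2) / (s * t) - s * t))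
      (c * Real.exp (-(d2 ^ 2) / 2) * (d1' - t)) σ :=
    HasDerivAt.comp (h₂ := stdNormalCDF) σ (hasDerivAt_stdNormalCDF' d2) hd2'
  have hf : HasDerivAt (fun s => bsCall S K τ s)
      (S * (c * Real.exp (-(d1 ^ 2) / 2) * d1') - K * (c * Real.exp (-(d2 ^ 2) / 2) * (d1' - t)))
      σ := by
    unfold bsCall
    exact (hN1.const_mul S).sub (hN2.const_mul K)
  refine ⟨_, ?_, hf⟩
  have hd1s : d1 * (σ * t) = m + σ ^ 2 * τ / 2 := by
    rw [hd1def]; field_simp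
  have hexp : K * Real.exp (-(d2 ^ 2) / 2) = S * Real.exp (-(d1 ^ 2) / 2) := by
    have h1 : -(d2 ^ 2) / 2 = -(d1 ^ 2) / 2 + m := by
      rw [hd2def]
      have : (σ * t) ^ 2 = σ ^ 2 * τ := by rw [mul_pow, ht2]
      nlinarith [hd1s]
    rw [h1, Real.exp_add, hm, Real.exp_log (by positivity)]
    field_simp
  have hval : S * (c * Real.exp (-(d1 ^ 2) / 2) * d1')
      - K * (c * Real.exp (-(d2 ^ 2) / 2) * (d1' - t))
      = S * c * Real.exp (-(d1 ^ 2) / 2) * t := by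
    linear_combination (-(c * (d1' - t))) * hexp
  rw [hval]
  positivity

lemma bsCall_mono' (S K τ : ℝ) (hS : 0 < S) (hK : 0 < K) (hτ : 0 < τ) :
    StrictMonoOn (fun σ => bsCall S K τ σ) (Ioi 0) := by
  refine strictMonoOn_of_deriv_pos (convex_Ioi 0) ?_ ?_
  · intro x hx
    obtain ⟨v, _, hv⟩ := bsCall_deriv_pos' S K τ hS hK hτ hx
    exact hv.continuousAt.continuousWithinAt
  · intro x hx
    rw [interior_Ioi] at hx
    obtain ⟨v, hvpos, hv⟩ := bsCall_deriv_pos' S K τ hS hK hτ hx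
    rw [hv.deriv]
    exact hvpos

lemma bsPut_symm' (U K1 τ σ : ℝ) (hU : 0 < U) (hK1 : 0 < K1) (hτ : 0 < τ) :
    bsPut U K1 τ σ = K1 / U * bsCall U (U ^ 2 / K1) τ σ := by
  have htpos : 0 < Real.sqrt τ := Real.sqrt_pos.mpr hτ
  have ht2 : Real.sqrt τ ^ 2 = τ := Real.sq_sqrt hτ.le
  set t := Real.sqrt τ with ht
  set m := Real.log (U / K1) with hm
  have hlog : Real.log (U / (U ^ 2 / K1)) = -m := by
    rw [hm, ← Real.log_inv]
    congr 1
    field_simp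
  unfold bsPut bsCall
  simp only [hlog]
  set d1 := (m + σ ^ 2 * τ / 2) / (σ * t) with hd1
  have e1 : (-m + σ ^ 2 * τ / 2) / (σ * t) = -(d1 - σ * t) := by
    rcases eq_or_ne σ 0 with h | h
    · simp [h, hd1]
    rw [hd1]
    field_simp
    nlinarith [ht2]
  rw [e1, show -(d1 - σ * t) - σ * t = -(d1) by ring,
    stdNormalCDF_neg', stdNormalCDF_neg']
  field_simp
  ring

/-- With nonnegative implied skew (`σ_a ≥ σ_b > 0`), the risk-reversal
portfolio long the OTM put struck at `K₁ < U` and short `K₁/U` OTM calls struck at `K₂ = U²/K₁`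
has a nonnegative price. -/
theorem bs_skew_risk_reversal_nonneg (U K1 τ σa σb : ℝ)
    (hU : 0 < U) (hK1 : 0 < K1) (hK1U : K1 < U) (hτ : 0 < τ)
    (hσb : 0 < σb) (hab : σb ≤ σa) :
    0 ≤ bsPut U K1 τ σa - K1 / U * bsCall U (U ^ 2 / K1) τ σb := by
  have hσa : 0 < σa := lt_of_lt_of_le hσb hab
  rw [← bsPut_symm' U K1 τ σb hU hK1 hτ]
  have hmono := (bsCall_mono' U K1 τ hU hK1 hτ).monotoneOn
    (mem_Ioi.mpr hσb) (mem_Ioi.mpr hσa) hab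
  unfold bsPut
  linarith
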